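/- (Nesting of Whitney intervals for nested open sets.) Let Ω' ⊆ Ω be open sets with ∅ ≠ Ω' and Ω ⊊ ℝ₊ = (0,∞). Let I ∈ W(Ω) and I' ∈ W(Ω'), where W(U) denotes the collection of dyadic intervals J that are maximal subject to 3J ⊆ U and 5J ⊄ U. Then I ⊊ I' is impossible; that is, no Whitney interval of the larger set Ω is strictly contained in a Whitney interval of the smaller set Ω'. -/
import Mathlib


open MeasureTheory Set ENNReal

/-- The dyadic interval `(m 2^k, (m+1) 2^k)` of `ℝ₊`. -/
def dyad (k : ℤ) (m : ℕ) : Set ℝ := Set.Ioo ((m : ℝ) * 2 ^ k) (((m : ℝ) + 1) * 2 ^ k)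

/-- The Carleson box `Ĵ = J × (0, |J|]` of the dyadic interval `J = (m 2^k, (m+1) 2^k)`. -/
def dyadBox (k : ℤ) (m : ℕ) : Set (ℝ × ℝ) := dyad k m ×ˢ Set.Ioc (0 : ℝ) (2 ^ k)

/-- The dyadic Carleson-box maximal function `M_ν ψ`. -/
noncomputable def Mdyad (ν : Measure (ℝ × ℝ)) (ψ : ℝ × ℝ → ℝ) (p : ℝ × ℝ) : ℝ≥0∞ :=
  ⨆ (k : ℤ) (m : ℕ) (_ : p ∈ dyadBox k m ∧ ν (dyadBox k m) ≠ 0),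
    (ν (dyadBox k m))⁻¹ * ∫⁻ q in dyadBox k m, ENNReal.ofReal |ψ q| ∂ν

/-- The triple `3I` of the interval `I = (a, b)`, intersected with `ℝ₊`. -/
def tri (a b : ℝ) : Set ℝ :=
  Set.Ioo ((a + b) / 2 - 3 * (b - a) / 2) ((a + b) / 2 + 3 * (b - a) / 2) ∩ Set.Ioi 0

/-- The quintuple `5I` of the interval `I = (a, b)`, intersected with `ℝ₊`. -/
def quint (a b : ℝ) : Set ℝ :=
  Set.Ioo ((a + b) / 2 - 5 * (b - a) / 2) ((a + b) / 2 + 5 * (b - a) / 2) ∩ Set.Ioi 0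

/-- The triple `3I` of the dyadic interval indexed by `(k, m)`. -/
def triD (k : ℤ) (m : ℕ) : Set ℝ := tri ((m : ℝ) * 2 ^ k) (((m : ℝ) + 1) * 2 ^ k)

/-- The quintuple `5I` of the dyadic interval indexed by `(k, m)`. -/
def quintD (k : ℤ) (m : ℕ) : Set ℝ := quint ((m : ℝ) * 2 ^ k) (((m : ℝ) + 1) * 2 ^ k)

/-- The dyadic interval indexed by `(k, m)` is a Whitney interval of the open set `Ω`:
it is maximal among dyadic intervals `I` subject to `3I ⊆ Ω` and `5I ⊄ Ω`. -/
def IsWhitney (Ω : Set ℝ) (k : ℤ) (m : ℕ) : Prop :=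
  triD k m ⊆ Ω ∧ ¬ quintD k m ⊆ Ω ∧
    ∀ k' : ℤ, ∀ m' : ℕ, dyad k m ⊂ dyad k' m' →
      ¬ (triD k' m' ⊆ Ω ∧ ¬ quintD k' m' ⊆ Ω)

/-- Nesting of Whitney intervals for nested open sets: if
`Ω' ⊆ Ω`, `I ∈ W(Ω)` and `I' ∈ W(Ω')`, then `I ⊊ I'` is impossible. -/
theorem whitney_intervals_no_strict_nesting (Ω Ω' : Set ℝ)
    (hopen : IsOpen Ω) (hopen' : IsOpen Ω') (hss : Ω' ⊆ Ω) (hne' : Ω'.Nonempty)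
    (hsub : Ω ⊆ Set.Ioi 0) (hproper : Ω ≠ Set.Ioi 0)
    (k : ℤ) (m : ℕ) (k' : ℤ) (m' : ℕ)
    (hI : IsWhitney Ω k m) (hI' : IsWhitney Ω' k' m') :
    ¬ dyad k m ⊂ dyad k' m' := by
  intro hlt
  have h2k : (0:ℝ) < 2 ^ k := by positivity
  have h2k' : (0:ℝ) < 2 ^ k' := by positivity
  have hab : (m:ℝ) * 2^k < ((m:ℝ)+1) * 2^k := by nlinarith
  have hsubI := hlt.1
  rw [dyad, dyad, Set.Ioo_subset_Ioo_iff hab] at hsubI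
  obtain ⟨h1, h2⟩ := hsubI
  have hkk' : k < k' := by
    by_contra h
    push_neg at h
    have hle : (2:ℝ)^k' ≤ 2^k := zpow_le_zpow_right₀ one_le_two h
    have hk : (2:ℝ)^k = 2^k' := le_antisymm (by nlinarith) hle
    have heq : dyad k m = dyad k' m' := by
      unfold dyad
      have e1 : (m:ℝ) * 2^k = (m':ℝ) * 2^k' := by linarith
      have e2 : ((m:ℝ)+1) * 2^k = ((m':ℝ)+1) * 2^k' := by nlinarith
      rw [e1, e2]
    exact hlt.2 (heq ▸ Set.Subset.refl _)
  have h2k2 : 2 * (2:ℝ)^k ≤ 2^k' := by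
    have h := zpow_le_zpow_right₀ (one_le_two (α := ℝ)) (by omega : k + 1 ≤ k')
    rwa [zpow_add_one₀ (by norm_num : (2:ℝ) ≠ 0), mul_comm] at h
  have hq : quintD k m ⊆ triD k' m' := by
    unfold quintD triD quint tri
    refine Set.inter_subset_inter (Set.Ioo_subset_Ioo ?_ ?_) subset_rfl <;> nlinarith
  exact hI.2.1 fun x hx => hss (hI'.1 (hq hx))
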